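/- Under the hypotheses of the kernel perturbation estimate (|K_α(x,y) − K_α(x₀,y₀)| ≤ (1/2)|K_α(x₀,y₀)| for all x ∈ Q, y ∈ P, and |K_α(x₀,y₀)| ≥ a/|x₀−y₀|^{n−α} with |x₀−y₀| = |t| r √n), for any nonnegative f supported in Q and any y ∈ P, |∫_Q K_α(x,y) f(x) dx| ≥ (2^{n−α−1} a / (|t|√n)^{n−α}) |Q|^{α/n} avg_Q f. -/

import Mathlib

open MeasureTheory Finset

/-- The (closed) cube `Q(c,r)` with center `c`, radius `r` (side length `2r`),
sides parallel to the coordinate axes. -/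
def cube {n : ℕ} (c : Fin n → ℝ) (r : ℝ) : Set (Fin n → ℝ) := {y | ∀ i, |y i - c i| ≤ r}

/-- The Euclidean norm on `Fin n → ℝ`. -/
noncomputable def enorm2 {n : ℕ} (v : Fin n → ℝ) : ℝ := Real.sqrt (∑ i, v i ^ 2)

/-- Under the kernel perturbation estimate
(`|K_α(x,y) − K_α(x₀,y₀)| ≤ ½|K_α(x₀,y₀)|` for all `x ∈ Q`, `y ∈ P`) and the
non-degeneracy `|K_α(x₀,y₀)| ≥ a/|x₀−y₀|^{n−α}` with `|x₀−y₀| = |t| r √n`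
(`Q = Q(x₀,r)` and `P = Q(y₀,r)` a `(t,u₁)` pair), for any nonnegative `f` supported
in `Q` and any `y ∈ P`,
`|∫_Q K_α(x,y) f(x) dx| ≥ (2^{n−α−1} a / (|t|√n)^{n−α}) |Q|^{α/n} avg_Q f`. -/
theorem stmt15 {n : ℕ} (hn : 0 < n) (α a t r : ℝ)
    (h0 : 0 ≤ α) (hα : α < n) (ha : 0 < a) (hr : 0 < r) (ht : t ≠ 0)
    (u₁ : Fin n → ℝ) (hu : ∑ i, u₁ i ^ 2 = 1)
    (K : (Fin n → ℝ) → (Fin n → ℝ) → ℝ)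
    (hKmeas : ∀ y, Measurable fun x => K x y)
    (x₀ y₀ : Fin n → ℝ)
    (hpair : y₀ = x₀ + (t * r * Real.sqrt n) • u₁)
    (hpert : ∀ x ∈ cube x₀ r, ∀ y ∈ cube y₀ r,
      |K x y - K x₀ y₀| ≤ (1 / 2) * |K x₀ y₀|)
    (hnd : a / enorm2 (x₀ - y₀) ^ ((n : ℝ) - α) ≤ |K x₀ y₀|)
    (f : (Fin n → ℝ) → ℝ) (hf0 : ∀ x, 0 ≤ f x)
    (hsupp : ∀ x ∉ cube x₀ r, f x = 0)
    (hfi : IntegrableOn f (cube x₀ r) volume)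
    (y : Fin n → ℝ) (hy : y ∈ cube y₀ r) :
    2 ^ ((n : ℝ) - α - 1) * a / ((|t| * Real.sqrt n) ^ ((n : ℝ) - α))
        * (volume (cube x₀ r)).toReal ^ (α / n)
        * ⨍ x in cube x₀ r, f x ∂volume
      ≤ |∫ x in cube x₀ r, K x y * f x ∂volume| := by
  set Q := cube x₀ r with hQdef
  set N : ℝ := (n : ℝ) with hN
  have hNpos : (0:ℝ) < N := by rw [hN]; exact_mod_cast hn
  have hsq : 0 < Real.sqrt n := Real.sqrt_pos.mpr hNpos
  have htpos : 0 < |t| := abs_pos.mpr ht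
  -- cube as a pi set, measurability, volume
  have hQpi : Q = Set.pi Set.univ (fun i => Set.Icc (x₀ i - r) (x₀ i + r)) := by
    ext z
    simp only [hQdef, cube, Set.mem_setOf_eq, Set.mem_pi, Set.mem_univ, Set.mem_Icc,
      true_implies, abs_le]
    constructor <;> intro h i <;> have := h i <;> constructor <;> linarith [this.1, this.2]
  have hQm : MeasurableSet Q := by
    rw [hQpi]; exact MeasurableSet.univ_pi fun i => measurableSet_Icc
  have h2r : (0:ℝ) < 2 * r := by linarith
  have hvolR : (volume Q).toReal = (2*r)^n := by
    rw [hQpi, volume_pi_pi]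
    have e : ∀ i : Fin n, volume (Set.Icc (x₀ i - r) (x₀ i + r)) = ENNReal.ofReal (2*r) := by
      intro i; rw [Real.volume_Icc]; congr 1; ring
    simp only [e, Finset.prod_const, Finset.card_univ, Fintype.card_fin]
    rw [ENNReal.toReal_pow, ENNReal.toReal_ofReal h2r.le]
  -- norm computation
  have henorm : enorm2 (x₀ - y₀) = |t| * r * Real.sqrt n := by
    have hx : ∀ i, (x₀ - y₀) i = -((t * r * Real.sqrt n) * u₁ i) := by
      intro i; simp only [hpair, Pi.sub_apply, Pi.add_apply, Pi.smul_apply, smul_eq_mul]; ring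
    unfold enorm2
    have : ∑ i, (x₀ - y₀) i ^ 2 = (t * r * Real.sqrt n)^2 := by
      simp_rw [hx]
      have e : ∀ i : Fin n, (-(t * r * Real.sqrt n * u₁ i))^2
          = (t * r * Real.sqrt n)^2 * u₁ i ^ 2 := fun i => by ring
      rw [Finset.sum_congr rfl fun i _ => e i, ← Finset.mul_sum, hu, mul_one]
    rw [this, Real.sqrt_sq_eq_abs, abs_mul, abs_mul, abs_of_pos hr,
      abs_of_pos hsq]
  have hK₀ : a / (|t| * r * Real.sqrt n) ^ (N - α) ≤ |K x₀ y₀| := by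
    rwa [henorm] at hnd
  -- basic positivity
  set I : ℝ := ∫ x in Q, f x ∂volume with hIdef
  have hI0 : 0 ≤ I := setIntegral_nonneg hQm fun x _ => hf0 x
  -- integrability of K·f on Q
  have hKf : IntegrableOn (fun x => K x y * f x) Q volume := by
    apply Integrable.bdd_mul (c := (3/2) * |K x₀ y₀|) hfi
      ((hKmeas y).aestronglyMeasurable.restrict)
    refine (ae_restrict_iff' hQm).mpr (ae_of_all _ fun x hx => ?_)
    have h1 := hpert x hx y hy
    have h2 : |K x y| ≤ |K x y - K x₀ y₀| + |K x₀ y₀| := by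
      calc |K x y| = |(K x y - K x₀ y₀) + K x₀ y₀| := by ring_nf
        _ ≤ |K x y - K x₀ y₀| + |K x₀ y₀| := abs_add_le _ _
    simp only [Real.norm_eq_abs]; linarith
  -- the half bound
  have hhalf : |K x₀ y₀| / 2 * I ≤ |∫ x in Q, K x y * f x ∂volume| := by
    rcases le_or_gt 0 (K x₀ y₀) with hK | hK
    · have habs : |K x₀ y₀| = K x₀ y₀ := abs_of_nonneg hK
      have hmono : ∀ x ∈ Q, K x₀ y₀ / 2 * f x ≤ K x y * f x := by
        intro x hx
        have h1 := hpert x hx y hy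
        have h2 : K x₀ y₀ / 2 ≤ K x y := by
          have h3 := (abs_le.mp h1).1; rw [habs] at h3; linarith
        exact mul_le_mul_of_nonneg_right h2 (hf0 x)
      have := setIntegral_mono_on (hfi.const_mul (K x₀ y₀ / 2)) hKf hQm hmono
      rw [integral_const_mul] at this
      calc |K x₀ y₀| / 2 * I = K x₀ y₀ / 2 * I := by rw [habs]
        _ ≤ ∫ x in Q, K x y * f x ∂volume := this
        _ ≤ |∫ x in Q, K x y * f x ∂volume| := le_abs_self _
    · have habs : |K x₀ y₀| = -(K x₀ y₀) := abs_of_neg hK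
      have hmono : ∀ x ∈ Q, K x y * f x ≤ K x₀ y₀ / 2 * f x := by
        intro x hx
        have h1 := hpert x hx y hy
        have h2 : K x y ≤ K x₀ y₀ / 2 := by
          have := (abs_le.mp h1).2; rw [habs] at this; linarith
        exact mul_le_mul_of_nonneg_right h2 (hf0 x)
      have := setIntegral_mono_on hKf (hfi.const_mul (K x₀ y₀ / 2)) hQm hmono
      rw [integral_const_mul] at this
      calc |K x₀ y₀| / 2 * I = -(K x₀ y₀ / 2 * I) := by rw [habs]; ring
        _ ≤ -(∫ x in Q, K x y * f x ∂volume) := by linarith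
        _ ≤ |∫ x in Q, K x y * f x ∂volume| := neg_le_abs _
  -- rewrite the average and the power of the volume
  have havg : (⨍ x in Q, f x ∂volume) = ((2*r)^(N:ℝ))⁻¹ * I := by
    rw [setAverage_eq, measureReal_def, hvolR, smul_eq_mul, ← hIdef]
    congr 2
    rw [← Real.rpow_natCast (2*r) n]
  have hpow : (volume Q).toReal ^ (α / (n:ℝ)) = (2*r)^α := by
    rw [hvolR, ← Real.rpow_natCast (2*r) n, ← Real.rpow_mul h2r.le]
    congr 1
    field_simp
  rw [hpow, havg]
  set T : ℝ := |t| * Real.sqrt n with hT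
  have hTpos : 0 < T := mul_pos htpos hsq
  -- key constant inequality
  have hsplit : (|t| * r * Real.sqrt n) ^ (N - α) = T ^ (N - α) * r ^ (N - α) := by
    rw [hT, show |t| * r * Real.sqrt n = (|t| * Real.sqrt n) * r by ring,
      Real.mul_rpow (mul_pos htpos hsq).le hr.le]
  have hkey : 2 ^ (N - α - 1) * a / T ^ (N - α) * (2*r)^α * ((2*r)^(N:ℝ))⁻¹
      ≤ |K x₀ y₀| / 2 := by
    have hTr : 0 < T ^ (N - α) := Real.rpow_pos_of_pos hTpos _
    have hrr : 0 < r ^ (N - α) := Real.rpow_pos_of_pos hr _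
    have e0 : ((2*r)^(N:ℝ))⁻¹ = (2*r) ^ (-N) := by
      rw [Real.rpow_neg h2r.le]
    have e1 : (2*r:ℝ)^α * (2*r)^(-N) = 2^(α-N) * r^(α-N) := by
      rw [← Real.rpow_add h2r, show α + -N = α - N by ring,
        Real.mul_rpow (by norm_num) hr.le]
    have e2 : (2:ℝ)^(N-α-1) * 2^(α-N) = 1/2 := by
      rw [← Real.rpow_add two_pos, show N-α-1+(α-N) = (-1:ℝ) by ring, Real.rpow_neg_one]
      norm_num
    have e3 : r^(α-N) = (r^(N-α))⁻¹ := by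
      rw [← Real.rpow_neg hr.le, show -(N-α) = α - N by ring]
    have heq : 2 ^ (N - α - 1) * a / T ^ (N - α) * (2*r)^α * ((2*r)^(N:ℝ))⁻¹
        = a / (T ^ (N - α) * r ^ (N - α)) / 2 := by
      rw [e0, mul_assoc, e1, e3]
      linear_combination (a / (T ^ (N - α) * r ^ (N - α))) * e2
    rw [heq, ← hsplit]
    have := hK₀
    linarith
  calc 2 ^ (N - α - 1) * a / T ^ (N - α) * (2*r)^α * (((2*r)^(N:ℝ))⁻¹ * I)
      = (2 ^ (N - α - 1) * a / T ^ (N - α) * (2*r)^α * ((2*r)^(N:ℝ))⁻¹) * I := by ring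
    _ ≤ |K x₀ y₀| / 2 * I := mul_le_mul_of_nonneg_right hkey hI0
    _ ≤ |∫ x in Q, K x y * f x ∂volume| := hhalf
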